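/- If a connected Δ-regular graph G on n vertices admits a frozen (Δ+1)-colouring, then all Δ+1 colour classes have the same size and hence n ≡ 0 (mod Δ+1). -/

import Mathlib

lemma frozen_unique_nbr {V : Type} [Fintype V] [DecidableEq V]
    (G : SimpleGraph V) [DecidableRel G.Adj] (Δ : ℕ)
    (hreg : ∀ v, G.degree v = Δ)
    (γ : V → Fin (Δ + 1))
    (hproper : ∀ u v, G.Adj u v → γ u ≠ γ v)
    (hfrozen : ∀ v : V, ∀ c : Fin (Δ + 1), c ≠ γ v → ∃ u, G.Adj v u ∧ γ u = c)
    (v : V) : ∀ u₁ u₂, G.Adj v u₁ → G.Adj v u₂ → γ u₁ = γ u₂ → u₁ = u₂ := by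
  intro u₁ u₂ h1 h2 hγ
  have ht : (Finset.univ.erase (γ v)).card = Δ := by
    rw [Finset.card_erase_of_mem (Finset.mem_univ _)]
    simp
  have key := Finset.inj_on_of_surj_on_of_card_le
    (s := G.neighborFinset v) (t := Finset.univ.erase (γ v))
    (fun u _ => γ u)
    (fun u hu => by
      simp only [Finset.mem_erase, Finset.mem_univ, and_true]
      exact hproper u v (G.adj_symm ((G.mem_neighborFinset v u).1 hu)))
    (fun c hc => by
      obtain ⟨u, hu, hc'⟩ := hfrozen v c (Finset.mem_erase.1 hc).1
      exact ⟨u, (G.mem_neighborFinset v u).2 hu, hc'⟩)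
    (by rw [G.card_neighborFinset_eq_degree, hreg, ht])
  exact key ((G.mem_neighborFinset v u₁).2 h1) ((G.mem_neighborFinset v u₂).2 h2) hγ

/-- If a connected Δ-regular graph admits a frozen (Δ+1)-colouring,
then all Δ+1 colour classes have the same size, and hence (Δ+1) ∣ n. -/
theorem frozen_regular_colour_classes {V : Type} [Fintype V] [DecidableEq V]
    (G : SimpleGraph V) [DecidableRel G.Adj] (Δ : ℕ)
    (hconn : G.Connected) (hreg : ∀ v, G.degree v = Δ)
    (γ : V → Fin (Δ + 1))
    (hproper : ∀ u v, G.Adj u v → γ u ≠ γ v)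
    (hfrozen : ∀ v : V, ∀ c : Fin (Δ + 1), c ≠ γ v → ∃ u, G.Adj v u ∧ γ u = c) :
    (∀ i j : Fin (Δ + 1),
        (Finset.univ.filter fun v => γ v = i).card
          = (Finset.univ.filter fun v => γ v = j).card) ∧
      (Δ + 1) ∣ Fintype.card V := by
  have huniq := frozen_unique_nbr G Δ hreg γ hproper hfrozen
  have key : ∀ i j : Fin (Δ + 1), i ≠ j →
      (Finset.univ.filter fun v => γ v = i).card
        ≤ (Finset.univ.filter fun v => γ v = j).card := by
    intro i j hij
    -- map each v of colour i to its unique neighbour of colour j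
    have hex : ∀ v ∈ Finset.univ.filter fun v => γ v = i,
        ∃ u, G.Adj v u ∧ γ u = j := by
      intro v hv
      simp only [Finset.mem_filter] at hv
      exact hfrozen v j (hv.2 ▸ hij.symm)
    choose f hf hfc using hex
    apply Finset.card_le_card_of_injOn (fun v => if h : v ∈ Finset.univ.filter fun v => γ v = i then f v h else v)
    · intro v hv
      beta_reduce; rw [dif_pos (Finset.mem_coe.1 hv)]
      simp only [Finset.mem_coe, Finset.mem_filter, Finset.mem_univ, true_and]
      exact hfc v hv
    · intro v₁ h₁ v₂ h₂ heq
      replace h₁ := Finset.mem_coe.1 h₁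
      replace h₂ := Finset.mem_coe.1 h₂
      simp only at heq
      rw [dif_pos h₁, dif_pos h₂] at heq
      have hi₁ : γ v₁ = i := (Finset.mem_filter.1 h₁).2
      have hi₂ : γ v₂ = i := (Finset.mem_filter.1 h₂).2
      have ha₁ : G.Adj v₁ (f v₂ h₂) := by rw [← heq]; exact hf v₁ h₁
      exact huniq (f v₂ h₂) v₁ v₂ (G.adj_symm ha₁) (G.adj_symm (hf v₂ h₂))
        (hi₁.trans hi₂.symm)
  have heq : ∀ i j : Fin (Δ + 1),
      (Finset.univ.filter fun v => γ v = i).card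
        = (Finset.univ.filter fun v => γ v = j).card := by
    intro i j
    rcases eq_or_ne i j with rfl | h
    · rfl
    · exact le_antisymm (key i j h) (key j i h.symm)
  refine ⟨heq, ?_⟩
  have hcard : Fintype.card V =
      ∑ c : Fin (Δ + 1), (Finset.univ.filter fun v => γ v = c).card := by
    rw [← Finset.card_univ]
    exact Finset.card_eq_sum_card_fiberwise (fun x _ => Finset.mem_univ (γ x))
  rw [hcard]
  have : ∀ c : Fin (Δ + 1), (Finset.univ.filter fun v => γ v = c).card
      = (Finset.univ.filter fun v => γ v = 0).card := fun c => heq c 0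
  rw [Finset.sum_congr rfl (fun c _ => this c), Finset.sum_const, Finset.card_univ,
    Fintype.card_fin, smul_eq_mul]
  exact Dvd.intro _ rfl
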